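/- Let X be a completely metrizable topological space of weight κ ≥ ℵ₀, and let 𝓔 be a countable family of relations on X, each relation R ∈ 𝓔 being an Fσ subset of X^r for some finite arity r ≥ 1. Then exactly one of the following two statements holds: (S) there exists an ordinal γ < κ⁺ such that every 𝓔-independent subset of X has Cantor–Bendixson rank < γ (i.e. its γ-th Cantor–Bendixson derivative is empty); (P) there exists a perfect 𝓔-independent subset of X. -/

import Mathlib

open Set Filter Cardinal FirstOrder

universe u v

/-- A topological space is completely metrizable if its topology is induced by a complete metric. -/
def CompletelyMetrizable (Y : Type*) [t : TopologicalSpace Y] : Prop :=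
  ∃ m : MetricSpace Y, m.toUniformSpace.toTopologicalSpace = t ∧ @CompleteSpace Y m.toUniformSpace

/-- The weight of a topological space: the least cardinality of a topological basis. -/
noncomputable def topWeight (X : Type u) [TopologicalSpace X] : Cardinal.{u} :=
  ⨅ B : { B : Set (Set X) // TopologicalSpace.IsTopologicalBasis B }, Cardinal.mk B.1

/-- A set is dense-in-itself if it is nonempty and has no isolated points
(in the subspace topology). -/
def DenseInItselfSet {X : Type*} [TopologicalSpace X] (S : Set X) : Prop :=
  S.Nonempty ∧ ∀ x ∈ S, AccPt x (𝓟 S)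

/-- A set is perfect if it is nonempty, completely metrizable in the subspace topology,
and has no isolated points. -/
def IsPerfectSet {X : Type*} [TopologicalSpace X] (P : Set X) : Prop :=
  P.Nonempty ∧ CompletelyMetrizable P ∧ ∀ x ∈ P, AccPt x (𝓟 P)

/-- The `γ`-th Cantor–Bendixson derivative of a set: iterate the operation of removing
isolated points, taking intersections at limit stages. -/
noncomputable def cbDeriv {X : Type u} [TopologicalSpace X] (A : Set X) (γ : Ordinal.{v}) :
    Set X :=
  Ordinal.limitRecOn γ A (fun _ ih => { x ∈ ih | AccPt x (𝓟 ih) })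
    (fun o _ ih => ⋂ (o' : Ordinal.{v}) (h : o' < o), ih o' h)

/-- `S` is independent with respect to the `n`-ary relation `R`. -/
def IsRelIndep {X : Type*} {n : ℕ} (R : Set (Fin n → X)) (S : Set X) : Prop :=
  ∀ s : Fin n → X, (∀ i, s i ∈ S) → Function.Injective s → s ∉ R

/-- `S` is a clique with respect to the `n`-ary relation `R`. -/
def IsRelClique {X : Type*} {n : ℕ} (R : Set (Fin n → X)) (S : Set X) : Prop :=
  ∀ s : Fin n → X, (∀ i, s i ∈ S) → Function.Injective s → s ∈ R

/-- A set is Fσ if it is a countable union of closed sets. -/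
def IsFsigma {Y : Type*} [TopologicalSpace Y] (s : Set Y) : Prop :=
  ∃ F : ℕ → Set Y, (∀ n, IsClosed (F n)) ∧ s = ⋃ n, F n

open Topology ENNReal

set_option linter.unusedSectionVars false
set_option linter.unusedVariables false

section CB
variable {X : Type u} [TopologicalSpace X] (A B : Set X)

@[simp] theorem cbDeriv_zero : cbDeriv A (0 : Ordinal.{v}) = A :=
  Ordinal.limitRecOn_zero _ _ _

theorem cbDeriv_succ (γ : Ordinal.{v}) :
    cbDeriv A (Order.succ γ) = { x ∈ cbDeriv A γ | AccPt x (𝓟 (cbDeriv A γ)) } :=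
  Ordinal.limitRecOn_succ _ _ _ _

theorem cbDeriv_limit {γ : Ordinal.{v}} (h : Order.IsSuccLimit γ) :
    cbDeriv A γ = ⋂ (o' : Ordinal.{v}) (_ : o' < γ), cbDeriv A o' :=
  Ordinal.limitRecOn_limit _ _ _ _ h

theorem accPt_mono {x : X} {S T : Set X} (h : S ⊆ T) (hS : AccPt x (𝓟 S)) :
    AccPt x (𝓟 T) :=
  hS.mono (principal_mono.2 h)

theorem accPt_inter_of_nhds {x : X} {S U : Set X} (hU : U ∈ 𝓝 x) (hS : AccPt x (𝓟 S)) :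
    AccPt x (𝓟 (S ∩ U)) := by
  rw [accPt_iff_nhds] at hS ⊢
  intro V hV
  obtain ⟨y, ⟨hy1, hy2⟩, hy3⟩ := hS (V ∩ U) (Filter.inter_mem hV hU)
  exact ⟨y, ⟨hy1.1, hy2, hy1.2⟩, hy3⟩

theorem cbDeriv_subset : ∀ γ : Ordinal.{v}, cbDeriv A γ ⊆ A := by
  intro γ
  induction γ using Ordinal.limitRecOn with
  | zero => simp
  | add_one γ ih => rw [Ordinal.add_one_eq_succ, cbDeriv_succ]; exact fun x hx => ih hx.1
  | limit γ hγ ih =>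
    rw [cbDeriv_limit A hγ]
    exact fun x hx => ih 0 hγ.pos (by simpa using mem_iInter₂.1 hx 0 hγ.pos)

theorem cbDeriv_mono (h : A ⊆ B) : ∀ γ : Ordinal.{v}, cbDeriv A γ ⊆ cbDeriv B γ := by
  intro γ
  induction γ using Ordinal.limitRecOn with
  | zero => simpa
  | add_one γ ih =>
    rw [Ordinal.add_one_eq_succ, cbDeriv_succ, cbDeriv_succ]
    rintro x ⟨hx1, hx2⟩
    exact ⟨ih hx1, accPt_mono ih hx2⟩
  | limit γ hγ ih =>
    rw [cbDeriv_limit A hγ, cbDeriv_limit B hγ]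
    exact fun x hx => mem_iInter₂.2 fun o ho => ih o ho (mem_iInter₂.1 hx o ho)

theorem cbDeriv_anti : ∀ {γ δ : Ordinal.{v}}, γ ≤ δ → cbDeriv A δ ⊆ cbDeriv A γ := by
  intro γ δ
  induction δ using Ordinal.limitRecOn with
  | zero => intro h; rw [nonpos_iff_eq_zero.1 h]
  | add_one δ ih =>
    rw [Ordinal.add_one_eq_succ]
    intro h
    rcases Order.le_succ_iff_eq_or_le.1 h with rfl | h'
    · exact fun _ h => h
    · rw [cbDeriv_succ]; exact fun x hx => ih h' hx.1
  | limit δ hδ ih =>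
    intro h
    rcases eq_or_lt_of_le h with rfl | h'
    · exact fun _ h => h
    · rw [cbDeriv_limit A hδ]
      exact fun x hx => mem_iInter₂.1 hx γ h'

/-- locality of the CB derivative with respect to open sets -/
theorem cbDeriv_open_local {U : Set X} (hU : IsOpen U) :
    ∀ γ : Ordinal.{v}, cbDeriv A γ ∩ U ⊆ cbDeriv (A ∩ U) γ := by
  intro γ
  induction γ using Ordinal.limitRecOn with
  | zero => simp
  | add_one γ ih =>
    rw [Ordinal.add_one_eq_succ, cbDeriv_succ, cbDeriv_succ]
    rintro x ⟨⟨hx1, hx2⟩, hxU⟩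
    refine ⟨ih ⟨hx1, hxU⟩, ?_⟩
    exact accPt_mono ih (accPt_inter_of_nhds (hU.mem_nhds hxU) hx2)
  | limit γ hγ ih =>
    rw [cbDeriv_limit A hγ, cbDeriv_limit (A ∩ U) hγ]
    rintro x ⟨hx, hxU⟩
    exact mem_iInter₂.2 fun o ho => ih o ho ⟨mem_iInter₂.1 hx o ho, hxU⟩


theorem cbDeriv_of_denseInItself {P : Set X} (hP : ∀ x ∈ P, AccPt x (𝓟 P)) :
    ∀ γ : Ordinal.{v}, cbDeriv P γ = P := by
  intro γ
  induction γ using Ordinal.limitRecOn with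
  | zero => simp
  | add_one γ ih => rw [Ordinal.add_one_eq_succ, cbDeriv_succ, ih]; exact Set.ext fun x => ⟨fun h => h.1, fun h => ⟨h, hP x h⟩⟩
  | limit γ hγ ih =>
    rw [cbDeriv_limit P hγ]
    refine subset_antisymm (fun x hx => ?_) (fun x hx => mem_iInter₂.2 fun o ho => by rw [ih o ho]; exact hx)
    have := mem_iInter₂.1 hx 0 hγ.pos
    rwa [ih 0 hγ.pos] at this

section Helpers

/-- extract a uniform positive bound from finitely many monotone conditions -/
theorem exists_uniform_delta {I : Sort*} [Finite I] (p : I → ℝ → Prop)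
    (hmono : ∀ i δ δ', 0 < δ' → δ' ≤ δ → p i δ → p i δ')
    (h : ∀ i, ∃ δ > 0, p i δ) : ∃ δ > 0, ∀ i, p i δ := by
  have : ∀ i : PLift I, ∃ δ > 0, p i.down δ := fun i => h i.down
  choose f hf1 hf2 using this
  rcases isEmpty_or_nonempty (PLift I) with hI | hI
  · exact ⟨1, one_pos, fun i => (hI.false ⟨i⟩).elim⟩
  · have : Finite (PLift I) := inferInstance
    cases nonempty_fintype (PLift I)
    obtain ⟨i₀, -, hmin⟩ := Finset.exists_min_image Finset.univ f ⟨Classical.arbitrary _, Finset.mem_univ _⟩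
    refine ⟨f i₀, hf1 i₀, fun i => hmono _ _ _ (hf1 i₀) (hmin ⟨i⟩ (Finset.mem_univ _)) (hf2 ⟨i⟩)⟩

/-- pigeonhole: a function from ordinals to a set of size `≤ κ` is constant on a
cofinal-in-`κ⁺` set -/
theorem exists_cofinal_constant {κ : Cardinal.{u}} (hκ : ℵ₀ ≤ κ) {T : Type u} (hT : #T ≤ κ)
    (g : Ordinal.{u} → T) :
    ∃ t : T, ∀ γ₀ < (Order.succ κ).ord, ∃ γ, γ₀ ≤ γ ∧ γ < (Order.succ κ).ord ∧ g γ = t := by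
  by_contra hcon
  push_neg at hcon
  choose β hβ1 hβ2 using hcon
  have hreg : (Order.succ κ).IsRegular := Cardinal.isRegular_succ hκ
  have hsup : (⨆ t, β t) < (Order.succ κ).ord := by
    apply Ordinal.iSup_lt_ord _ hβ1
    rw [hreg.cof_eq]
    exact hT.trans_lt (Order.lt_succ κ)
  exact hβ2 (g (⨆ t, β t)) (⨆ t, β t) (le_ciSup (Ordinal.bddAbove_range β) (g (⨆ t, β t)))
    hsup rfl

end Helpers

end CB

theorem exists_basis_card (X : Type u) [TopologicalSpace X] :
    ∃ B : Set (Set X), TopologicalSpace.IsTopologicalBasis B ∧ #B = topWeight X := by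
  have hne : Nonempty { B : Set (Set X) // TopologicalSpace.IsTopologicalBasis B } :=
    ⟨⟨_, TopologicalSpace.isTopologicalBasis_opens⟩⟩
  have := csInf_mem (Set.range_nonempty
    (fun B : { B : Set (Set X) // TopologicalSpace.IsTopologicalBasis B } => Cardinal.mk B.1))
  obtain ⟨B, hB⟩ := this
  exact ⟨B.1, B.2, hB⟩

section Construction

variable {X : Type u} [MetricSpace X]
variable (κ : Cardinal.{u}) (B : Set (Set X))
variable (r : ℕ → ℕ) (C : ∀ n : ℕ, ℕ → Set (Fin (r n) → X))

/-- all pieces independent -/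
def IndC (S : Set X) : Prop := ∀ n k, IsRelIndep (C n k) S

theorem IndC.mono {S T : Set X} (h : S ⊆ T) (hT : IndC r C T) : IndC r C S :=
  fun n k g hg hInj => hT n k g (fun i => h (hg i)) hInj

/-- the invariant maintained along the construction of levels of the Cantor scheme -/
def Intrinsic (ℓ : ℕ) (V : (Fin ℓ → Bool) → Set X) : Prop :=
  (∀ s, IsOpen (V s)) ∧
  (∀ s, EMetric.diam (V s) ≤ (2⁻¹ : ℝ≥0∞) ^ ℓ) ∧
  (∀ s t, s ≠ t → Disjoint (V s) (V t)) ∧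
  (∀ γ < (Order.succ κ).ord, ∃ S : Set X, IndC r C S ∧
      ∀ s, (cbDeriv (S ∩ V s) γ).Nonempty) ∧
  (∀ n k : ℕ, n < ℓ → k < ℓ → ∀ φ : Fin (r n) → (Fin ℓ → Bool), Function.Injective φ →
    ∀ g : Fin (r n) → X, (∀ i, g i ∈ V (φ i)) → g ∉ C n k)

theorem base_lemma (hκ : ℵ₀ ≤ κ) (hB : TopologicalSpace.IsTopologicalBasis B) (x₀ : X)
    (hx₀ : ∀ U ∈ B, x₀ ∈ U → ∀ γ < (Order.succ κ).ord,
      ∃ S : Set X, IndC r C S ∧ S ⊆ U ∧ (cbDeriv S γ).Nonempty) :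
    ∃ V : (Fin 0 → Bool) → Set X, Intrinsic κ r C 0 V := by
  obtain ⟨U, hUB, hxU, hUball⟩ := hB.exists_subset_of_mem_open
    (Metric.mem_ball_self (by norm_num : (0:ℝ) < 1/4)) Metric.isOpen_ball
  refine ⟨fun _ => U, fun s => hB.isOpen hUB, fun s => ?_, fun s t hst => absurd (Subsingleton.elim s t) hst, fun γ hγ => ?_, fun n k hn => absurd hn (Nat.not_lt_zero n)⟩
  · calc EMetric.diam U ≤ EMetric.diam (Metric.ball x₀ (1/4)) := EMetric.diam_mono hUball
      _ ≤ 2 * ENNReal.ofReal (1/4) := by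
          rw [← Metric.emetric_ball]; exact EMetric.diam_ball
      _ ≤ (2⁻¹ : ℝ≥0∞) ^ (0:ℕ) := by
          rw [pow_zero, show (1/4:ℝ) = ((4:ℝ))⁻¹ by norm_num,
            ENNReal.ofReal_inv_of_pos (by norm_num), ENNReal.ofReal_ofNat]
          rw [show (4:ℝ≥0∞) = 2*2 by norm_num, ENNReal.mul_inv (by norm_num) (by norm_num),
            ← mul_assoc, ENNReal.mul_inv_cancel (by norm_num) (by norm_num), one_mul]
          exact ENNReal.inv_le_one.2 one_le_two
  · obtain ⟨S, hS1, hS2, hS3⟩ := hx₀ U hUB hxU γ hγ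
    exact ⟨S, hS1, fun s => by rwa [Set.inter_eq_self_of_subset_left hS2]⟩

/-- candidate refinements at a step of the construction -/
def StepCand (ℓ : ℕ) (V : (Fin ℓ → Bool) → Set X) : Type u :=
  {c : ((Fin ℓ → Bool) × Bool) → Set X //
    (∀ p, c p ∈ B) ∧
    (∀ p, closure (c p) ⊆ V p.1) ∧
    (∀ s, Disjoint (c (s, false)) (c (s, true))) ∧
    (∀ p, EMetric.diam (c p) ≤ (2⁻¹ : ℝ≥0∞) ^ (ℓ+1)) ∧
    (∀ n k : ℕ, n < ℓ+1 → k < ℓ+1 → ∀ φ : Fin (r n) → ((Fin ℓ → Bool) × Bool),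
      Function.Injective φ →
      ∀ g : Fin (r n) → X, (∀ i, g i ∈ c (φ i)) → g ∉ C n k)}

theorem stepCand_card (hκ : ℵ₀ ≤ κ) (hBcard : #↥B ≤ κ) (ℓ : ℕ)
    (V : (Fin ℓ → Bool) → Set X) : #(StepCand B r C ℓ V) ≤ κ := by
  classical
  set P := (Fin ℓ → Bool) × Bool
  have hinj : Function.Injective
      (fun c : StepCand B r C ℓ V => fun p : ULift.{u} P => (⟨c.1 p.down, c.2.1 p.down⟩ : ↥B)) := by
    intro c d h
    apply Subtype.ext
    funext p
    have := congrFun h ⟨p⟩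
    exact congrArg Subtype.val this
  calc #(StepCand B r C ℓ V) ≤ #(ULift.{u} P → ↥B) := Cardinal.mk_le_of_injective hinj
    _ = #↥B ^ #(ULift.{u} P) := (Cardinal.power_def _ _).symm
    _ ≤ κ ^ #(ULift.{u} P) := by
        apply Cardinal.power_le_power_right hBcard
    _ ≤ κ := by
        have hPfin : #(ULift.{u} P) < ℵ₀ := by
          apply Cardinal.lt_aleph0_of_finite
        exact Cardinal.pow_le hκ hPfin

theorem ofReal_half_pow (n : ℕ) : ENNReal.ofReal ((1/2:ℝ)^n) = (2⁻¹:ℝ≥0∞)^n := by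
  rw [ENNReal.ofReal_pow (by norm_num), show (1/2:ℝ) = ((2:ℝ))⁻¹ by norm_num,
    ENNReal.ofReal_inv_of_pos (by norm_num), ENNReal.ofReal_ofNat]

theorem step_claim1 (hκ : ℵ₀ ≤ κ) (hB : TopologicalSpace.IsTopologicalBasis B)
    (hC : ∀ n k, IsClosed (C n k)) (ℓ : ℕ) (V : (Fin ℓ → Bool) → Set X)
    (hV : Intrinsic κ r C ℓ V) (γ : Ordinal.{u}) (hγ : γ < (Order.succ κ).ord) :
    ∃ c : StepCand B r C ℓ V, ∃ S : Set X, IndC r C S ∧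
      ∀ p, (cbDeriv (S ∩ c.1 p) γ).Nonempty := by
  classical
  obtain ⟨hop, hdiam, hdis, hgood, -⟩ := hV
  have hlim : Order.IsSuccLimit ((Order.succ κ).ord) := Cardinal.isSuccLimit_ord (hκ.trans (Order.le_succ κ))
  obtain ⟨S, hSInd, hSgood⟩ := hgood _ (hlim.succ_lt hγ)
  choose x hx using hSgood
  have hx1 : ∀ s, x s ∈ cbDeriv (S ∩ V s) γ ∧
      AccPt (x s) (𝓟 (cbDeriv (S ∩ V s) γ)) := by
    intro s; have := hx s; rwa [cbDeriv_succ] at this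
  have hxV : ∀ s, x s ∈ V s := fun s => (cbDeriv_subset _ _ (hx1 s).1).2
  have hy : ∀ s, ∃ z, z ∈ V s ∩ cbDeriv (S ∩ V s) γ ∧ z ≠ x s := fun s =>
    accPt_iff_nhds.1 (hx1 s).2 (V s) ((hop s).mem_nhds (hxV s))
  choose y hy1 hy2 using hy
  set pt : (Fin ℓ → Bool) × Bool → X := fun p => if p.2 then y p.1 else x p.1 with hpt
  have hptD : ∀ p, pt p ∈ cbDeriv (S ∩ V p.1) γ := by
    rintro ⟨s, b⟩; cases b
    · simpa [hpt] using (hx1 s).1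
    · simpa [hpt] using (hy1 s).2
  have hptV : ∀ p, pt p ∈ V p.1 := fun p => (cbDeriv_subset _ _ (hptD p)).2
  have hptS : ∀ p, pt p ∈ S := fun p => (cbDeriv_subset _ _ (hptD p)).1
  have hxy : ∀ s, y s ≠ x s := hy2
  have hptInj : Function.Injective pt := by
    rintro ⟨s, b⟩ ⟨t, b'⟩ h
    by_cases hst : s = t
    · subst hst
      cases b <;> cases b'
      · rfl
      · exact absurd (show x s = y s by simpa [hpt] using h).symm (hxy s)
      · exact absurd (show y s = x s by simpa [hpt] using h) (hxy s)
      · rfl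
    · exfalso
      have hmem := hptV ⟨t, b'⟩
      rw [← h] at hmem
      exact Set.disjoint_left.1 (hdis s t hst) (hptV ⟨s, b⟩) hmem
  -- uniform δ for the finitely many avoidance conditions
  have hdelta : ∃ δ > 0, ∀ i : Σ n : Fin (ℓ+1), Σ k : Fin (ℓ+1),
      {φ : Fin (r n.1) → ((Fin ℓ → Bool) × Bool) // Function.Injective φ},
      ∀ g : Fin (r i.1.1) → X, (∀ t, dist (g t) (pt (i.2.2.1 t)) < δ) → g ∉ C i.1.1 i.2.1.1 := by
    apply exists_uniform_delta
    · intro i δ δ' hδ'pos hle hp g hg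
      exact hp g fun t => lt_of_lt_of_le (hg t) hle
    · rintro ⟨n, k, φ, hφ⟩
      have hnot : (fun t => pt (φ t)) ∉ C n.1 k.1 :=
        hSInd n.1 k.1 _ (fun t => hptS _) (hptInj.comp hφ)
      obtain ⟨ε, hε, hball⟩ := Metric.isOpen_iff.1 (hC n.1 k.1).isOpen_compl _ hnot
      exact ⟨ε, hε, fun g hg => hball (Metric.mem_ball.2 ((dist_pi_lt_iff hε).2 hg))⟩
  obtain ⟨δ, hδpos, hδ⟩ := hdelta
  -- radii
  have hrad : ∀ p : (Fin ℓ → Bool) × Bool, ∃ ρ > 0, Metric.ball (pt p) ρ ⊆ V p.1 :=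
    fun p => Metric.isOpen_iff.1 (hop p.1) _ (hptV p)
  choose ρV hρV1 hρV2 using hrad
  have hdxy : ∀ s, 0 < dist (x s) (y s) := fun s => dist_pos.2 fun h => hxy s h.symm
  set rad : (Fin ℓ → Bool) × Bool → ℝ := fun p =>
    min (min (δ/2) ((1/2:ℝ)^(ℓ+2))) (min (ρV p) (dist (x p.1) (y p.1) / 2)) with hraddef
  have hradpos : ∀ p, 0 < rad p := fun p => lt_min (lt_min (by positivity) (by positivity))
    (lt_min (hρV1 p) (by simpa using half_pos (hdxy p.1)))
  have hUex : ∀ p, ∃ U ∈ B, pt p ∈ U ∧ U ⊆ Metric.ball (pt p) (rad p / 2) := fun p =>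
    hB.exists_subset_of_mem_open (Metric.mem_ball_self (half_pos (hradpos p))) Metric.isOpen_ball
  choose U hUB hUmem hUsub using hUex
  have hUball : ∀ p, U p ⊆ Metric.ball (pt p) (rad p) := fun p =>
    (hUsub p).trans (Metric.ball_subset_ball (by linarith [hradpos p]))
  have hUV : ∀ p, closure (U p) ⊆ V p.1 := by
    intro p
    have h1 : closure (U p) ⊆ Metric.closedBall (pt p) (rad p / 2) :=
      (closure_mono (hUsub p)).trans Metric.closure_ball_subset_closedBall
    have h2 : Metric.closedBall (pt p) (rad p / 2) ⊆ Metric.ball (pt p) (rad p) :=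
      Metric.closedBall_subset_ball (half_lt_self (hradpos p))
    have h3 : Metric.ball (pt p) (rad p) ⊆ Metric.ball (pt p) (ρV p) :=
      Metric.ball_subset_ball ((min_le_right _ _).trans (min_le_left _ _))
    exact h1.trans (h2.trans (h3.trans (hρV2 p)))
  have hradδ : ∀ p, rad p ≤ δ/2 := fun p => (min_le_left _ _).trans (min_le_left _ _)
  have hradpow : ∀ p, rad p ≤ (1/2:ℝ)^(ℓ+2) := fun p => (min_le_left _ _).trans (min_le_right _ _)
  have hraddist : ∀ p : (Fin ℓ → Bool) × Bool, rad p ≤ dist (x p.1) (y p.1) / 2 :=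
    fun p => (min_le_right _ _).trans (min_le_right _ _)
  have hptfalse : ∀ s, pt (s, false) = x s := fun s => rfl
  have hpttrue : ∀ s, pt (s, true) = y s := fun s => rfl
  refine ⟨⟨fun p => U p, hUB, hUV, ?_, ?_, ?_⟩, S, hSInd, ?_⟩
  · -- siblings disjoint
    intro s
    rw [Set.disjoint_left]
    intro z hz0 hz1
    have e0 := Metric.mem_ball.1 (hUsub (s, false) hz0)
    have e1 := Metric.mem_ball.1 (hUsub (s, true) hz1)
    rw [hptfalse] at e0
    rw [hpttrue] at e1
    have l0 : rad (s, false) ≤ dist (x s) (y s) / 2 := hraddist (s, false)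
    have l1 : rad (s, true) ≤ dist (x s) (y s) / 2 := hraddist (s, true)
    have htri := dist_triangle (x s) z (y s)
    have hc0 : dist (x s) z = dist z (x s) := dist_comm _ _
    have hc1 : dist z (y s) = dist z (y s) := rfl
    have hp0 := hradpos (s, false)
    have hp1 := hradpos (s, true)
    linarith
  · -- diameters
    intro p
    apply EMetric.diam_le
    intro z hz z' hz'
    have e0 := Metric.mem_ball.1 (hUsub p hz)
    have e1 := Metric.mem_ball.1 (hUsub p hz')
    have hd : dist z z' ≤ (1/2:ℝ)^(ℓ+1) := by
      have htri := dist_triangle z (pt p) z'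
      have hcz : dist (pt p) z' = dist z' (pt p) := dist_comm _ _
      have hpow : (1/2:ℝ)^(ℓ+2) = (1/2:ℝ)^(ℓ+1)/2 := by ring
      have := hradpow p
      have hp := hradpos p
      linarith [dist_comm z (pt p)]
    calc edist z z' = ENNReal.ofReal (dist z z') := edist_dist z z'
      _ ≤ ENNReal.ofReal ((1/2:ℝ)^(ℓ+1)) := ENNReal.ofReal_le_ofReal hd
      _ = (2⁻¹:ℝ≥0∞)^(ℓ+1) := ofReal_half_pow (ℓ+1)
  · -- avoidance
    intro n k hn hk φ hφ g hg
    refine hδ ⟨⟨n, hn⟩, ⟨k, hk⟩, ⟨φ, hφ⟩⟩ g fun t => ?_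
    have e0 := Metric.mem_ball.1 (hUsub (φ t) (hg t))
    have := hradδ (φ t)
    have hp := hradpos (φ t)
    linarith
  · -- goodness
    intro p
    have hloc := cbDeriv_open_local (S ∩ V p.1) (hB.isOpen (hUB p)) γ
      (Set.mem_inter (hptD p) (hUmem p))
    have hsub : S ∩ V p.1 ∩ U p ⊆ S ∩ U p := fun z hz => ⟨hz.1.1, hz.2⟩
    exact ⟨pt p, cbDeriv_mono _ _ hsub γ hloc⟩

theorem step_lemma (hκ : ℵ₀ ≤ κ) (hB : TopologicalSpace.IsTopologicalBasis B)
    (hBcard : #↥B ≤ κ) (hC : ∀ n k, IsClosed (C n k)) (ℓ : ℕ)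
    (V : (Fin ℓ → Bool) → Set X) (hV : Intrinsic κ r C ℓ V) :
    ∃ V' : (Fin (ℓ+1) → Bool) → Set X, Intrinsic κ r C (ℓ+1) V' ∧
      ∀ (s : Fin ℓ → Bool) (b : Bool), closure (V' (Fin.snoc s b)) ⊆ V s := by
  classical
  have hlim : Order.IsSuccLimit ((Order.succ κ).ord) := Cardinal.isSuccLimit_ord (hκ.trans (Order.le_succ κ))
  have hne : Nonempty (StepCand B r C ℓ V) :=
    ⟨(step_claim1 κ B r C hκ hB hC ℓ V hV 0 hlim.pos).choose⟩
  set g : Ordinal.{u} → StepCand B r C ℓ V := fun γ =>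
    if h : γ < (Order.succ κ).ord then (step_claim1 κ B r C hκ hB hC ℓ V hV γ h).choose
    else hne.some with hgdef
  have hg : ∀ γ (h : γ < (Order.succ κ).ord), ∃ S : Set X, IndC r C S ∧
      ∀ p, (cbDeriv (S ∩ (g γ).1 p) γ).Nonempty := by
    intro γ h
    have := (step_claim1 κ B r C hκ hB hC ℓ V hV γ h).choose_spec
    rw [hgdef]
    simpa only [dif_pos h] using this
  obtain ⟨c, hc⟩ := exists_cofinal_constant hκ (stepCand_card κ B r C hκ hBcard ℓ V) g
  -- c is good at every stage below κ⁺
  have hcgood : ∀ γ < (Order.succ κ).ord, ∃ S : Set X, IndC r C S ∧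
      ∀ p, (cbDeriv (S ∩ c.1 p) γ).Nonempty := by
    intro γ₀ hγ₀
    obtain ⟨γ, hγ₁, hγ₂, hγ₃⟩ := hc γ₀ hγ₀
    obtain ⟨S, hS1, hS2⟩ := hg γ hγ₂
    rw [hγ₃] at hS2
    exact ⟨S, hS1, fun p => (hS2 p).mono (cbDeriv_anti _ hγ₁)⟩
  obtain ⟨hcB, hcclos, hcsib, hcdiam, hcavoid⟩ := c.2
  refine ⟨fun t => c.1 (Fin.init t, t (Fin.last ℓ)), ⟨?_, ?_, ?_, ?_, ?_⟩, ?_⟩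
  · exact fun t => hB.isOpen (hcB _)
  · exact fun t => hcdiam _
  · -- disjointness
    intro t t' htt'
    show Disjoint (c.1 (Fin.init t, t (Fin.last ℓ))) (c.1 (Fin.init t', t' (Fin.last ℓ)))
    by_cases hinit : Fin.init t = Fin.init t'
    · have hlast : t (Fin.last ℓ) ≠ t' (Fin.last ℓ) := by
        intro hl
        apply htt'
        have h1 := Fin.snoc_init_self t
        have h2 := Fin.snoc_init_self t'
        rw [← h1, ← h2, hinit, hl]
      rcases Bool.eq_false_or_eq_true (t (Fin.last ℓ)) with h | h <;>
        rcases Bool.eq_false_or_eq_true (t' (Fin.last ℓ)) with h' | h' <;>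
        first
          | exact absurd (h.trans h'.symm) hlast
          | (rw [h, h', hinit]; exact hcsib _)
          | (rw [h, h', hinit]; exact (hcsib _).symm)
    · have hsubV : ∀ u : Fin (ℓ+1) → Bool,
          c.1 (Fin.init u, u (Fin.last ℓ)) ⊆ V (Fin.init u) :=
        fun u => subset_closure.trans (hcclos _)
      obtain ⟨-, -, hdis, -, -⟩ := hV
      exact Set.disjoint_of_subset (hsubV t) (hsubV t') (hdis _ _ hinit)
  · -- goodness
    intro γ hγ
    obtain ⟨S, hS1, hS2⟩ := hcgood γ hγ
    exact ⟨S, hS1, fun t => hS2 _⟩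
  · -- avoidance
    intro n k hn hk φ hφ gg hgg
    have hψ : Function.Injective
        (fun i => (Fin.init (φ i), φ i (Fin.last ℓ))) := by
      intro i j hij
      apply hφ
      have h1 := congrArg Prod.fst hij
      have h2 := congrArg Prod.snd hij
      simp only at h1 h2
      rw [← Fin.snoc_init_self (φ i), ← Fin.snoc_init_self (φ j), h1, h2]
    exact hcavoid n k hn hk _ hψ gg hgg
  · -- linking
    intro s b
    beta_reduce
    rw [Fin.init_snoc, Fin.snoc_last]
    exact hcclos (s, b)

theorem constructPerfect [CompleteSpace X] (hκ : ℵ₀ ≤ κ)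
    (hB : TopologicalSpace.IsTopologicalBasis B) (hBcard : #↥B ≤ κ)
    (hC : ∀ n k, IsClosed (C n k)) (x₀ : X)
    (hx₀ : ∀ U ∈ B, x₀ ∈ U → ∀ γ < (Order.succ κ).ord,
      ∃ S : Set X, IndC r C S ∧ S ⊆ U ∧ (cbDeriv S γ).Nonempty) :
    ∃ P : Set X, IsPerfectSet P ∧ ∀ n k, IsRelIndep (C n k) P := by
  classical
  have hlim : Order.IsSuccLimit ((Order.succ κ).ord) := Cardinal.isSuccLimit_ord (hκ.trans (Order.le_succ κ))
  obtain ⟨V₀, hV₀⟩ := base_lemma κ B r C hκ hB x₀ hx₀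
  let seq : ∀ ℓ, {V : (Fin ℓ → Bool) → Set X // Intrinsic κ r C ℓ V} :=
    Nat.rec ⟨V₀, hV₀⟩ (fun ℓ ih =>
      ⟨(step_lemma κ B r C hκ hB hBcard hC ℓ ih.1 ih.2).choose,
       (step_lemma κ B r C hκ hB hBcard hC ℓ ih.1 ih.2).choose_spec.1⟩)
  set W : ∀ ℓ, (Fin ℓ → Bool) → Set X := fun ℓ => (seq ℓ).1 with hWdef
  have hInt : ∀ ℓ, Intrinsic κ r C ℓ (W ℓ) := fun ℓ => (seq ℓ).2
  have hlink : ∀ ℓ (s : Fin ℓ → Bool) (b : Bool),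
      closure (W (ℓ+1) (Fin.snoc s b)) ⊆ W ℓ s := fun ℓ =>
    (step_lemma κ B r C hκ hB hBcard hC ℓ (seq ℓ).1 (seq ℓ).2).choose_spec.2
  -- branch prefixes
  let pre : (ℕ → Bool) → ∀ ℓ, (Fin ℓ → Bool) := fun α ℓ i => α i
  have hpre_succ : ∀ (α : ℕ → Bool) (ℓ : ℕ), pre α (ℓ+1) = Fin.snoc (pre α ℓ) (α ℓ) := by
    intro α ℓ
    funext i
    refine Fin.lastCases ?_ ?_ i
    · rw [Fin.snoc_last]
      rfl
    · intro j
      rw [Fin.snoc_castSucc]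
      show α (Fin.castSucc j).val = α j.val
      rw [Fin.coe_castSucc]
  have hne : ∀ ℓ (s : Fin ℓ → Bool), (W ℓ s).Nonempty := by
    intro ℓ s
    obtain ⟨S, -, h⟩ := (hInt ℓ).2.2.2.1 0 hlim.pos
    obtain ⟨z, hz⟩ := h s
    rw [cbDeriv_zero] at hz
    exact ⟨z, hz.2⟩
  have hsub : ∀ (α : ℕ → Bool) (ℓ : ℕ), W (ℓ+1) (pre α (ℓ+1)) ⊆ W ℓ (pre α ℓ) := by
    intro α ℓ
    rw [hpre_succ]
    exact subset_closure.trans (hlink ℓ (pre α ℓ) (α ℓ))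
  have hchain : ∀ (α : ℕ → Bool) (ℓ m : ℕ), ℓ ≤ m → W m (pre α m) ⊆ W ℓ (pre α ℓ) := by
    intro α ℓ m hm
    induction m, hm using Nat.le_induction with
    | base => exact subset_rfl
    | succ m hm ih => exact (hsub α m).trans ih
  set sp : (ℕ → Bool) → ℕ → X := fun α ℓ => (hne ℓ (pre α ℓ)).some with hspdef
  have hspmem : ∀ (α : ℕ → Bool) (ℓ : ℕ), sp α ℓ ∈ W ℓ (pre α ℓ) :=
    fun α ℓ => (hne ℓ (pre α ℓ)).some_mem
  have hspmem' : ∀ (α : ℕ → Bool) (ℓ m : ℕ), ℓ ≤ m → sp α m ∈ W ℓ (pre α ℓ) :=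
    fun α ℓ m hm => hchain α ℓ m hm (hspmem α m)
  have hWdiam : ∀ ℓ (s : Fin ℓ → Bool) z z', z ∈ W ℓ s → z' ∈ W ℓ s →
      edist z z' ≤ (2⁻¹ : ℝ≥0∞)^ℓ := fun ℓ s z z' hz hz' =>
    (EMetric.edist_le_diam_of_mem hz hz').trans ((hInt ℓ).2.1 s)
  have hpowsmall : ∀ ε : ℝ≥0∞, 0 < ε → ∃ ℓ : ℕ, (2⁻¹ : ℝ≥0∞)^ℓ < ε := by
    intro ε hε
    have ht := ENNReal.tendsto_pow_atTop_nhds_zero_of_lt_one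
      (by norm_num : (2⁻¹ : ℝ≥0∞) < 1)
    exact (ht.eventually (Iio_mem_nhds hε)).exists
  have hcauchy : ∀ α : ℕ → Bool, CauchySeq (sp α) := by
    intro α
    rw [EMetric.cauchySeq_iff]
    intro ε hε
    obtain ⟨ℓ, hℓ⟩ := hpowsmall ε hε
    exact ⟨ℓ, fun m hm m' hm' => lt_of_le_of_lt
      (hWdiam ℓ _ _ _ (hspmem' α ℓ m hm) (hspmem' α ℓ m' hm')) hℓ⟩
  have hex : ∀ α : ℕ → Bool, ∃ x : X, Tendsto (sp α) atTop (𝓝 x) :=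
    fun α => cauchySeq_tendsto_of_complete (hcauchy α)
  choose plim hplim using hex
  have hplimW : ∀ (α : ℕ → Bool) (ℓ : ℕ), plim α ∈ W ℓ (pre α ℓ) := by
    intro α ℓ
    have hev : ∀ᶠ m in atTop, sp α m ∈ W (ℓ+1) (pre α (ℓ+1)) :=
      eventually_atTop.2 ⟨ℓ+1, fun m hm => hspmem' α (ℓ+1) m hm⟩
    have hcl : plim α ∈ closure (W (ℓ+1) (pre α (ℓ+1))) :=
      mem_closure_of_tendsto (hplim α) hev
    rw [hpre_succ] at hcl
    exact hlink ℓ (pre α ℓ) (α ℓ) hcl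
  have hedistp : ∀ (α β : ℕ → Bool) (ℓ : ℕ), pre α ℓ = pre β ℓ →
      edist (plim α) (plim β) ≤ (2⁻¹ : ℝ≥0∞)^ℓ := by
    intro α β ℓ h
    have h1 := hplimW α ℓ
    have h2 := hplimW β ℓ
    rw [← h] at h2
    exact hWdiam ℓ _ _ _ h1 h2
  have hinj : Function.Injective plim := by
    intro α β h
    by_contra hab
    obtain ⟨i, hi⟩ := Function.ne_iff.1 hab
    have hnodes : pre α (i+1) ≠ pre β (i+1) := by
      intro hq
      exact hi (congrFun hq ⟨i, Nat.lt_succ_self i⟩)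
    have h1 := hplimW α (i+1)
    have h2 := hplimW β (i+1)
    rw [← h] at h2
    exact Set.disjoint_left.1 ((hInt (i+1)).2.2.1 _ _ hnodes) h1 h2
  -- the perfect set
  refine ⟨Set.range plim, ⟨Set.range_nonempty plim, ?_, ?_⟩, ?_⟩
  · -- completely metrizable: the range is compact
    have hcont : Continuous plim := by
      rw [continuous_iff_continuousAt]
      intro α
      rw [ContinuousAt, Metric.tendsto_nhds]
      intro ε hε
      obtain ⟨ℓ, hℓ⟩ := hpowsmall (ENNReal.ofReal ε) (ENNReal.ofReal_pos.2 hε)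
      have hNeq : {β : ℕ → Bool | pre β ℓ = pre α ℓ} =
          ⋂ i : Fin ℓ, (fun β : ℕ → Bool => β i.val) ⁻¹' {α i.val} := by
        ext β
        simp only [Set.mem_setOf_eq, Set.mem_iInter, Set.mem_preimage, Set.mem_singleton_iff]
        exact ⟨fun h i => congrFun h i, fun h => funext fun i => h i⟩
      have hNopen : IsOpen {β : ℕ → Bool | pre β ℓ = pre α ℓ} := by
        rw [hNeq]
        exact isOpen_iInter_of_finite fun i =>
          (continuous_apply (i : ℕ)).isOpen_preimage _ (isOpen_discrete _)
      filter_upwards [hNopen.mem_nhds (by simp : α ∈ {β : ℕ → Bool | pre β ℓ = pre α ℓ})]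
        with β hβ
      have := hedistp β α ℓ hβ
      exact edist_lt_ofReal.1 (lt_of_le_of_lt this hℓ)
    have hPcomp : IsCompact (Set.range plim) := isCompact_range hcont
    have hPc : CompactSpace ↥(Set.range plim) := isCompact_iff_compactSpace.1 hPcomp
    exact ⟨inferInstance, rfl, complete_of_compact⟩
  · -- no isolated points
    rintro x ⟨α, rfl⟩
    rw [accPt_iff_nhds]
    intro U hU
    obtain ⟨ε, hε, hball⟩ := Metric.mem_nhds_iff.1 hU
    obtain ⟨ℓ, hℓ⟩ := hpowsmall (ENNReal.ofReal ε) (ENNReal.ofReal_pos.2 hε)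
    set β : ℕ → Bool := fun m => if m = ℓ then !(α m) else α m with hβdef
    have hpre : pre β ℓ = pre α ℓ := by
      funext i
      show (if (i:ℕ) = ℓ then !(α i) else α i) = α i
      rw [if_neg (Nat.ne_of_lt i.isLt)]
    have hαβ : α ≠ β := by
      intro h
      have := congrFun h ℓ
      simp [hβdef] at this
    refine ⟨plim β, ⟨hball ?_, ⟨β, rfl⟩⟩, fun h => hαβ (hinj h.symm)⟩
    have := hedistp β α ℓ hpre
    have hd : dist (plim β) (plim α) < ε := edist_lt_ofReal.1 (lt_of_le_of_lt this hℓ)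
    exact Metric.mem_ball.2 hd
  · -- independence
    intro n k g hgP hginj hgC
    choose a ha using hgP
    have hainj : Function.Injective a := by
      intro i j hij
      apply hginj
      rw [← ha i, ← ha j, hij]
    set D : Fin (r n) × Fin (r n) → ℕ := fun q =>
      if h : a q.1 = a q.2 then 0 else (Function.ne_iff.1 h).choose with hDdef
    set L : ℕ := max n k + 1 + Finset.univ.sup D with hLdef
    have hnL : n < L := by
      have : n ≤ max n k := le_max_left n k
      omega
    have hkL : k < L := by
      have : k ≤ max n k := le_max_right n k
      omega
    have hDL : ∀ q, D q < L := by
      intro q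
      have : D q ≤ Finset.univ.sup D := Finset.le_sup (Finset.mem_univ q)
      omega
    have hsep : Function.Injective (fun i => pre (a i) L) := by
      intro i j hij
      by_contra hne'
      have haij : a i ≠ a j := fun h => hne' (hainj h)
      have hDij : (a i) (D (i, j)) ≠ (a j) (D (i, j)) := by
        have : D (i, j) = (Function.ne_iff.1 haij).choose := by
          rw [hDdef]; simp only [dif_neg haij]
        rw [this]
        exact (Function.ne_iff.1 haij).choose_spec
      exact hDij (congrFun hij (⟨D (i, j), hDL (i, j)⟩ : Fin L))
    have hmem : ∀ i, g i ∈ W L (pre (a i) L) := by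
      intro i
      rw [← ha i]
      exact hplimW (a i) L
    exact (hInt L).2.2.2.2 n k hnL hkL _ hsep g hmem hgC

end Construction

theorem mainMetric {X : Type u} [MetricSpace X] [CompleteSpace X]
    (κ : Cardinal.{u}) (hκ : ℵ₀ ≤ κ) (hw : topWeight X = κ)
    (r : ℕ → ℕ) (R : ∀ n : ℕ, Set (Fin (r n) → X))
    (hR : ∀ n, IsFsigma (R n)) :
    Xor'
      (∃ γ : Ordinal.{u}, γ < (Order.succ κ).ord ∧
        ∀ S : Set X, (∀ n, IsRelIndep (R n) S) → cbDeriv S γ = ∅)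
      (∃ P : Set X, IsPerfectSet P ∧ ∀ n, IsRelIndep (R n) P) := by
  classical
  choose F hFclosed hFeq using hR
  have hIndIff : ∀ S : Set X, (∀ n, IsRelIndep (R n) S) ↔ IndC r F S := by
    intro S
    constructor
    · intro h n k g hg hi hmem
      exact h n g hg hi (by rw [hFeq n]; exact Set.mem_iUnion.2 ⟨k, hmem⟩)
    · intro h n g hg hi hmem
      rw [hFeq n] at hmem
      obtain ⟨k, hk⟩ := Set.mem_iUnion.1 hmem
      exact h n k g hg hi hk
  obtain ⟨B, hB, hBcard⟩ := exists_basis_card X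
  rw [hw] at hBcard
  set Bdd : Set X → Prop := fun U => ∃ γ, γ < (Order.succ κ).ord ∧
    ∀ S : Set X, IndC r F S → S ⊆ U → cbDeriv S γ = ∅ with hBdddef
  have hnotboth : ∀ (γ : Ordinal.{u}), γ < (Order.succ κ).ord →
      (∀ S : Set X, (∀ n, IsRelIndep (R n) S) → cbDeriv S γ = ∅) →
      ¬ ∃ P : Set X, IsPerfectSet P ∧ ∀ n, IsRelIndep (R n) P := by
    rintro γ hγ hall ⟨P, hPperf, hPind⟩
    have h1 := cbDeriv_of_denseInItself hPperf.2.2 γ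
    rw [hall P hPind] at h1
    exact hPperf.1.ne_empty h1.symm
  by_cases H : ∀ x : X, ∃ U ∈ B, x ∈ U ∧ Bdd U
  · -- bounded case
    set ι := ↥{U : Set X | U ∈ B ∧ Bdd U} with hιdef
    have hι : #ι ≤ κ := by
      have h1 : {U : Set X | U ∈ B ∧ Bdd U} ⊆ B := fun U hU => hU.1
      calc #ι ≤ #↥B := Cardinal.mk_le_mk_of_subset h1
        _ = κ := hBcard
    have hchoice : ∀ i : ι, ∃ γ, γ < (Order.succ κ).ord ∧
        ∀ S : Set X, IndC r F S → S ⊆ i.1 → cbDeriv S γ = ∅ := fun i => i.2.2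
    choose γf hγf1 hγf2 using hchoice
    have hγlt : (⨆ i, γf i) < (Order.succ κ).ord := by
      apply Ordinal.iSup_lt_ord _ hγf1
      rw [(Cardinal.isRegular_succ hκ).cof_eq]
      exact hι.trans_lt (Order.lt_succ κ)
    have hbound : ∀ S : Set X, (∀ n, IsRelIndep (R n) S) → cbDeriv S (⨆ i, γf i) = ∅ := by
      intro S hS
      rw [Set.eq_empty_iff_forall_notMem]
      intro x hx
      obtain ⟨U, hUB, hxU, hUBdd⟩ := H x
      set i : ι := ⟨U, hUB, hUBdd⟩ with hidef
      have h1 : x ∈ cbDeriv S (⨆ i, γf i) ∩ U := ⟨hx, hxU⟩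
      have h2 := cbDeriv_open_local S (hB.isOpen hUB) (⨆ i, γf i) h1
      have h3 := cbDeriv_anti (S ∩ U) (le_ciSup (Ordinal.bddAbove_range γf) i) h2
      have h4 := hγf2 i (S ∩ U)
        (IndC.mono r F Set.inter_subset_left ((hIndIff S).1 hS)) Set.inter_subset_right
      rw [h4] at h3
      exact h3
    exact Or.inl ⟨⟨_, hγlt, hbound⟩, hnotboth _ hγlt hbound⟩
  · -- perfect case
    push_neg at H
    obtain ⟨x₀, hx₀⟩ := H
    have hx₀' : ∀ U ∈ B, x₀ ∈ U → ∀ γ < (Order.succ κ).ord,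
        ∃ S : Set X, IndC r F S ∧ S ⊆ U ∧ (cbDeriv S γ).Nonempty := by
      intro U hUB hxU γ hγ
      have hnb : ¬ Bdd U := hx₀ U hUB hxU
      simp only [hBdddef] at hnb
      push_neg at hnb
      obtain ⟨S, hS1, hS2, hS3⟩ := hnb γ hγ
      exact ⟨S, hS1, hS2, hS3⟩
    obtain ⟨P, hPperf, hPind⟩ :=
      constructPerfect κ B r F hκ hB (le_of_eq hBcard) hFclosed x₀ hx₀'
    have hPind' : ∀ n, IsRelIndep (R n) P := (hIndIff P).2 hPind
    exact Or.inr ⟨⟨P, hPperf, hPind'⟩,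
      fun ⟨γ, hγ, hball⟩ => hnotboth γ hγ hball ⟨P, hPperf, hPind'⟩⟩


theorem statement0 {X : Type u} [TopologicalSpace X] (hX : CompletelyMetrizable X)
    (κ : Cardinal.{u}) (hκ : ℵ₀ ≤ κ) (hw : topWeight X = κ)
    (r : ℕ → ℕ) (hr : ∀ n, 1 ≤ r n) (R : ∀ n : ℕ, Set (Fin (r n) → X))
    (hR : ∀ n, IsFsigma (R n)) :
    Xor'
      (∃ γ : Ordinal.{u}, γ < (Order.succ κ).ord ∧
        ∀ S : Set X, (∀ n, IsRelIndep (R n) S) → cbDeriv S γ = ∅)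
      (∃ P : Set X, IsPerfectSet P ∧ ∀ n, IsRelIndep (R n) P) := by
  obtain ⟨m, rfl, hcomp⟩ := hX
  letI : MetricSpace X := m
  haveI : CompleteSpace X := hcomp
  exact mainMetric κ hκ hw r R hR
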